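/- Let (r_n) be an increasing sequence of positive integers with r_{n+1}/r_n → ∞, and (ε_n) ⊂ (0,1) with (r_{n+1}/r_n)·ε_n ≥ 1 for all n. Then for all m > n, Leb(A_n ∩ A_m) ≤ Leb(A_m)·(Leb(A_n) + r_n/r_m), where A_n = {α ∈ ℝ/ℤ : ‖r_n α‖_ℤ ≤ ε_n}. -/

import Mathlib

open MeasureTheory Set
open scoped ENNReal NNReal

lemma periodic_mem_zsmul {p : ℝ} {S : Set ℝ} (hper : ∀ x : ℝ, x + p ∈ S ↔ x ∈ S)
    (k : ℤ) (x : ℝ) : x + k • p ∈ S ↔ x ∈ S := by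
  induction k using Int.induction_on generalizing x with
  | zero => simp
  | succ k ih =>
    have h1 : x + ((k : ℤ) + 1) • p = (x + p) + (k : ℤ) • p := by
      simp only [zsmul_eq_mul]; push_cast; ring
    rw [h1, ih (x + p), hper x]
  | pred k ih =>
    have h1 : x + (-(k : ℤ) - 1) • p = (x - p) + (-(k : ℤ)) • p := by
      simp only [zsmul_eq_mul]; push_cast; ring
    rw [h1, ih (x - p)]
    constructor
    · intro h; have := (hper (x - p)).mpr h; simpa using this
    · intro h; exact (hper (x - p)).mp (by simpa using h)

lemma periodic_measure_Ioc {p : ℝ} (hp : 0 < p) {S : Set ℝ} (hSm : MeasurableSet S)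
    (hper : ∀ x : ℝ, x + p ∈ S ↔ x ∈ S) (u v : ℝ) :
    volume (S ∩ Set.Ioc u (u + p)) = volume (S ∩ Set.Ioc v (v + p)) := by
  haveI : Fact (0 < p) := ⟨hp⟩
  set D : Set (AddCircle p) := ((↑) : ℝ → AddCircle p) '' S with hD
  have hpre : ((↑) : ℝ → AddCircle p) ⁻¹' D = S := by
    ext x
    refine ⟨?_, fun h => ⟨x, h, rfl⟩⟩
    rintro ⟨y, hy, hxy⟩
    obtain ⟨k, hk⟩ := AddSubgroup.mem_zmultiples_iff.mp
      ((QuotientAddGroup.eq (s := AddSubgroup.zmultiples p)).mp hxy)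
    have hx : x = y + k • p := by rw [hk]; ring
    rw [hx]
    exact (periodic_mem_zsmul hper k y).mpr hy
  have hDm : MeasurableSet D := by
    have : MeasurableSet (((↑) : ℝ → AddCircle p) ⁻¹' D) := hpre ▸ hSm
    exact measurableSet_quotient.mpr this
  have key : ∀ w : ℝ, volume (S ∩ Set.Ioc w (w + p)) = volume D := by
    intro w
    rw [AddCircle.add_projection_respects_measure (T := p) w hDm, hpre]
  rw [key u, key v]

lemma periodic_measure_Ioc_nat {p : ℝ} (hp : 0 < p) {S : Set ℝ} (hSm : MeasurableSet S)
    (hper : ∀ x : ℝ, x + p ∈ S ↔ x ∈ S) (u : ℝ) (K : ℕ) :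
    volume (S ∩ Set.Ioc u (u + K * p)) = K * volume (S ∩ Set.Ioc 0 (0 + p)) := by
  induction K with
  | zero => simp
  | succ K ih =>
    have h1 : u ≤ u + K * p := by
      have : (0:ℝ) ≤ K * p := by positivity
      linarith
    have h2 : u + K * p ≤ u + (K + 1 : ℕ) * p := by push_cast; nlinarith
    have hset : Set.Ioc u (u + (K + 1 : ℕ) * p)
        = Set.Ioc u (u + K * p) ∪ Set.Ioc (u + K * p) ((u + K * p) + p) := by
      rw [Set.Ioc_union_Ioc_eq_Ioc h1 (by linarith)]
      push_cast; ring_nf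
    rw [hset, Set.inter_union_distrib_left, measure_union, ih,
      periodic_measure_Ioc hp hSm hper (u + K * p) 0]
    · push_cast; ring
    · exact (Set.Ioc_disjoint_Ioc_of_le le_rfl).mono inf_le_right inf_le_right
    · exact hSm.inter measurableSet_Ioc

set_option maxHeartbeats 1000000 in
/-- Let `(r n)` be an increasing sequence of positive integers with `r_{n+1}/r_n → ∞`,
and `(ε n) ⊂ (0,1)` with `(r_{n+1}/r_n) ε_n ≥ 1` for all `n`.  Then, for all `m > n`,
the sets `A_n = {α ∈ ℝ/ℤ : ‖r_n α‖_ℤ ≤ ε_n}` satisfy the almost-independence estimate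
`Leb (A_n ∩ A_m) ≤ Leb (A_m) (Leb (A_n) + r_n / r_m)`. -/
theorem stmt3 (r : ℕ → ℕ) (hrpos : ∀ n, 0 < r n) (hrmono : StrictMono r)
    (hratio : Filter.Tendsto (fun n => (r (n + 1) : ℝ) / (r n : ℝ)) Filter.atTop Filter.atTop)
    (ε : ℕ → ℝ) (hε : ∀ n, ε n ∈ Set.Ioo (0 : ℝ) 1)
    (hεr : ∀ n, 1 ≤ (r (n + 1) : ℝ) / (r n : ℝ) * ε n)
    (A : ℕ → Set (AddCircle (1 : ℝ)))
    (hA : ∀ n, A n = {α : AddCircle (1 : ℝ) | ‖(r n) • α‖ ≤ ε n}) :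
    ∀ m n : ℕ, n < m →
      volume (A n ∩ A m) ≤ volume (A m) * (volume (A n) + ENNReal.ofReal ((r n : ℝ) / (r m : ℝ))) := by
  intro m n hnm
  have hεn := hε n
  have hεm := hε m
  have hNpos : (0:ℝ) < (r n : ℝ) := by exact_mod_cast hrpos n
  have hMpos : (0:ℝ) < (r m : ℝ) := by exact_mod_cast hrpos m
  -- closedness of the sets `A j`
  have hclosed : ∀ j, IsClosed (A j) := by
    intro j; rw [hA j]
    exact isClosed_le ((continuous_nsmul (r j) (M := AddCircle (1:ℝ))).norm) continuous_const
  have hvu : volume (Set.univ : Set (AddCircle (1:ℝ))) = 1 := by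
    rw [AddCircle.measure_univ]; simp
  have huniv : ∀ j, (1:ℝ)/2 ≤ ε j → A j = Set.univ := by
    intro j hj; rw [hA j]; ext α
    simp only [Set.mem_setOf_eq, Set.mem_univ, iff_true]
    have := AddCircle.norm_le_half_period (p := (1:ℝ)) (x := (r j) • α) one_ne_zero
    simp only [abs_one] at this
    linarith
  by_cases hhn : (1:ℝ)/2 ≤ ε n
  · rw [huniv n hhn, Set.univ_inter]
    calc volume (A m) = volume (A m) * 1 := (mul_one _).symm
      _ ≤ _ := by
        rw [hvu]
        exact mul_le_mul_right le_self_add _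
  by_cases hhm : (1:ℝ)/2 ≤ ε m
  · rw [huniv m hhm, Set.inter_univ, hvu, one_mul]
    exact le_add_right (le_refl _)
  push_neg at hhn hhm
  -- main case
  set p : ℝ := 1 / (r m : ℝ) with hpdef
  have hp : 0 < p := by positivity
  set S : Set ℝ := ((↑) : ℝ → AddCircle (1:ℝ)) ⁻¹' (A m) with hSdef
  have hSm : MeasurableSet S := (hclosed m).measurableSet.preimage AddCircle.measurable_mk'
  have hcoe_nsmul : ∀ (j : ℕ) (x : ℝ),
      (j • (x : AddCircle (1:ℝ))) = (((j : ℝ) * x : ℝ) : AddCircle (1:ℝ)) := by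
    intro j x
    have := map_nsmul (QuotientAddGroup.mk' (AddSubgroup.zmultiples (1:ℝ))) j x
    simpa [nsmul_eq_mul] using this.symm
  have hper : ∀ x : ℝ, x + p ∈ S ↔ x ∈ S := by
    intro x
    simp only [hSdef, Set.mem_preimage, hA m, Set.mem_setOf_eq]
    have h1 : ((x + p : ℝ) : AddCircle (1:ℝ)) = (x : AddCircle (1:ℝ)) + (p : AddCircle (1:ℝ)) :=
      rfl
    have h2 : (r m) • ((p : ℝ) : AddCircle (1:ℝ)) = 0 := by
      rw [hcoe_nsmul]
      have : (r m : ℝ) * p = 1 := by rw [hpdef]; field_simp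
      rw [this]
      exact AddCircle.coe_period 1
    rw [h1, smul_add, h2, add_zero]
  have hnorm : ∀ y : ℝ, ‖(y : AddCircle (1:ℝ))‖ = |y - round y| := by
    intro y
    rw [AddCircle.norm_eq]; simp
  have hmem : ∀ (j : ℕ) (x : ℝ),
      (x : AddCircle (1:ℝ)) ∈ A j ↔ |(r j : ℝ) * x - round ((r j : ℝ) * x)| ≤ ε j := by
    intro j x
    rw [hA j]
    simp only [Set.mem_setOf_eq]
    rw [hcoe_nsmul, hnorm]
  set c : ℝ≥0∞ := volume (S ∩ Set.Ioc 0 (0 + p)) with hcdef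
  -- total measure identity : M * c = volume (A m)
  have hMc : (r m : ℝ≥0∞) * c = volume (A m) := by
    have h1 : (0:ℝ) + (r m : ℝ) * p = 0 + 1 := by rw [hpdef]; field_simp
    have h2 := periodic_measure_Ioc_nat hp hSm hper 0 (r m)
    rw [h1] at h2
    have h3 := AddCircle.add_projection_respects_measure (T := (1:ℝ)) 0 (hclosed m).measurableSet
    rw [← h2, ← h3]
  -- volume of A n
  have hvol_n : volume (A n) = ENNReal.ofReal (2 * ε n) := by
    have hzsmul : MeasurePreserving (fun α : AddCircle (1:ℝ) => ((r n : ℤ)) • α) volume volume :=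
      MeasureTheory.Measure.measurePreserving_zsmul volume (by exact_mod_cast (hrpos n).ne')
    have hball : A n = (fun α : AddCircle (1:ℝ) => ((r n : ℤ)) • α) ⁻¹' Metric.closedBall 0 (ε n) := by
      rw [hA n]; ext α
      simp [Metric.mem_closedBall, dist_zero_right, natCast_zsmul]
    rw [hball, hzsmul.measure_preimage (measurableSet_closedBall.nullMeasurableSet),
      AddCircle.volume_closedBall]
    congr 1
    rw [min_eq_right]
    linarith
  -- the number of periods needed to cover one interval of the union defining A n
  set K : ℕ := ⌊2 * ε n * (r m : ℝ) / (r n : ℝ)⌋₊ + 1 with hKdef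
  have hKge : 2 * ε n * (r m : ℝ) / (r n : ℝ) < (K : ℝ) := by
    rw [hKdef]; push_cast; exact Nat.lt_floor_add_one _
  have hKle : (K : ℝ) ≤ 2 * ε n * (r m : ℝ) / (r n : ℝ) + 1 := by
    have := Nat.floor_le (show (0:ℝ) ≤ 2 * ε n * (r m : ℝ) / (r n : ℝ) by
      have := hεn.1; positivity)
    push_cast [hKdef]
    linarith
  -- bound on the measure of S in an interval of length ≤ K * p
  have hIcc : ∀ u v : ℝ, v - u ≤ (K : ℝ) * p → volume (S ∩ Set.Icc u v) ≤ (K : ℝ≥0∞) * c := by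
    intro u v huv
    have hsub : Set.Icc u v ⊆ {u} ∪ Set.Ioc u (u + K * p) := by
      intro x hx
      rcases eq_or_lt_of_le hx.1 with h | h
      · exact Or.inl (by simp [← h])
      · exact Or.inr ⟨h, by linarith [hx.2]⟩
    calc volume (S ∩ Set.Icc u v) ≤ volume (S ∩ ({u} ∪ Set.Ioc u (u + K * p))) :=
          measure_mono (Set.inter_subset_inter_right _ hsub)
      _ ≤ volume (S ∩ {u}) + volume (S ∩ Set.Ioc u (u + K * p)) := by
          rw [Set.inter_union_distrib_left]; exact measure_union_le _ _
      _ = 0 + (K : ℝ≥0∞) * c := by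
          rw [measure_mono_null Set.inter_subset_right (Real.volume_singleton),
            periodic_measure_Ioc_nat hp hSm hper u K]
      _ = (K : ℝ≥0∞) * c := by rw [zero_add]
  -- the covering of A n ∩ A m
  set a : ℝ := -(ε n / (r n : ℝ)) with hadef
  set pt : ℝ := ((r n : ℝ) - ε n) / (r n : ℝ) with hptdef
  have hcov : (QuotientAddGroup.mk ⁻¹' (A n ∩ A m) : Set ℝ) ∩ Set.Ioc a (a + 1) ⊆
      (⋃ k ∈ Finset.range (r n),
        (S ∩ Set.Icc (((k : ℝ) - ε n) / (r n : ℝ)) (((k : ℝ) + ε n) / (r n : ℝ)))) ∪ {pt} := by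
    rintro x ⟨hx, hxI⟩
    have hxS : x ∈ S := hx.2
    have hxn := (hmem n x).mp hx.1
    set k : ℤ := round ((r n : ℝ) * x) with hkdef
    rw [abs_le] at hxn
    have hxlo : a < x := hxI.1
    have hxhi : x ≤ a + 1 := hxI.2
    have hklo : (0:ℤ) ≤ k := by
      have h1 : (k:ℝ) ≥ (r n : ℝ) * x - ε n := by linarith [hxn.2]
      have h2 : (r n : ℝ) * x > (r n : ℝ) * a := by
        exact mul_lt_mul_of_pos_left hxlo hNpos
      have h3 : (r n : ℝ) * a = -(ε n) := by
        rw [hadef]; field_simp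
      have h4 : (k:ℝ) > -1 := by rw [h3] at h2; nlinarith
      have h5 : (-1:ℤ) < k := by exact_mod_cast h4
      omega
    have hkhiR : (k:ℝ) ≤ (r n : ℝ) := by
      have h1 : (k:ℝ) ≤ (r n : ℝ) * x + ε n := by linarith [hxn.1]
      have h2 : (r n : ℝ) * x ≤ (r n : ℝ) * (a + 1) := by
        exact mul_le_mul_of_nonneg_left hxhi hNpos.le
      have h3 : (r n : ℝ) * (a + 1) = (r n : ℝ) - ε n := by
        rw [hadef]; field_simp; ring
      linarith
    rcases lt_or_eq_of_le hkhiR with hklt | hkeq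
    · left
      have hkltN : k < (r n : ℤ) := by exact_mod_cast hklt
      have hcast : ((k.toNat : ℕ) : ℝ) = (k : ℝ) := by
        exact_mod_cast congrArg (Int.cast : ℤ → ℝ) (Int.toNat_of_nonneg hklo)
      have hidx : k.toNat ∈ Finset.range (r n) := by
        refine Finset.mem_range.mpr ?_
        have : (k.toNat : ℤ) < (r n : ℤ) := by rwa [Int.toNat_of_nonneg hklo]
        exact_mod_cast this
      refine Set.mem_biUnion hidx ⟨hxS, ?_, ?_⟩
      · rw [hcast, div_le_iff₀ hNpos]
        nlinarith [hxn.2]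
      · rw [hcast, le_div_iff₀ hNpos]
        nlinarith [hxn.1]
    · right
      have h2 : (r n : ℝ) * x ≤ (r n : ℝ) * (a + 1) := mul_le_mul_of_nonneg_left hxhi hNpos.le
      have h3 : (r n : ℝ) * (a + 1) = (r n : ℝ) - ε n := by
        rw [hadef]; field_simp; ring
      have hlow : (r n : ℝ) * x ≥ (r n : ℝ) - ε n := by
        linarith [hxn.1, hkeq]
      have hx_eq : (r n : ℝ) * x = (r n : ℝ) - ε n := le_antisymm (by linarith) hlow
      have : x = pt := by
        rw [hptdef, eq_div_iff hNpos.ne']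
        linarith [hx_eq]
      simp [this]
  -- putting everything together
  have hlen : ∀ k : ℕ, ((k : ℝ) + ε n) / (r n : ℝ) - ((k : ℝ) - ε n) / (r n : ℝ) ≤ (K : ℝ) * p := by
    intro k
    have h1 : ((k : ℝ) + ε n) / (r n : ℝ) - ((k : ℝ) - ε n) / (r n : ℝ) = 2 * ε n / (r n : ℝ) := by
      field_simp; ring
    rw [h1, hpdef]
    rw [div_le_iff₀ hNpos] at *
    have h2 : 2 * ε n * (r m : ℝ) / (r n : ℝ) < (K : ℝ) := hKge
    rw [div_lt_iff₀ hNpos] at h2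
    have h3 : (K:ℝ) * (1 / (r m : ℝ)) * (r n : ℝ) = (K:ℝ) * (r n : ℝ) / (r m : ℝ) := by ring
    rw [h3, le_div_iff₀ hMpos]
    nlinarith
  have hmain : volume (A n ∩ A m) ≤ (r n : ℝ≥0∞) * ((K : ℝ≥0∞) * c) := by
    have h0 := AddCircle.add_projection_respects_measure (T := (1:ℝ)) a
      ((hclosed n).inter (hclosed m)).measurableSet
    rw [h0]
    calc volume ((QuotientAddGroup.mk ⁻¹' (A n ∩ A m) : Set ℝ) ∩ Set.Ioc a (a + 1))
        ≤ volume ((⋃ k ∈ Finset.range (r n),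
            (S ∩ Set.Icc (((k : ℝ) - ε n) / (r n : ℝ)) (((k : ℝ) + ε n) / (r n : ℝ)))) ∪ {pt}) :=
          measure_mono hcov
      _ ≤ volume (⋃ k ∈ Finset.range (r n),
            (S ∩ Set.Icc (((k : ℝ) - ε n) / (r n : ℝ)) (((k : ℝ) + ε n) / (r n : ℝ))))
          + volume ({pt} : Set ℝ) := measure_union_le _ _
      _ = volume (⋃ k ∈ Finset.range (r n),
            (S ∩ Set.Icc (((k : ℝ) - ε n) / (r n : ℝ)) (((k : ℝ) + ε n) / (r n : ℝ)))) := by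
          rw [Real.volume_singleton, add_zero]
      _ ≤ ∑ k ∈ Finset.range (r n),
            volume (S ∩ Set.Icc (((k : ℝ) - ε n) / (r n : ℝ)) (((k : ℝ) + ε n) / (r n : ℝ))) :=
          measure_biUnion_finset_le _ _
      _ ≤ ∑ k ∈ Finset.range (r n), (K : ℝ≥0∞) * c :=
          Finset.sum_le_sum fun k _ => hIcc _ _ (hlen k)
      _ = (r n : ℝ≥0∞) * ((K : ℝ≥0∞) * c) := by
          rw [Finset.sum_const, Finset.card_range, nsmul_eq_mul]
  -- final arithmetic
  have hfinal : (r n : ℝ≥0∞) * ((K : ℝ≥0∞) * c)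
      ≤ volume (A m) * (volume (A n) + ENNReal.ofReal ((r n : ℝ) / (r m : ℝ))) := by
    rw [← hMc, hvol_n]
    have hcoef : (r n : ℝ≥0∞) * (K : ℝ≥0∞)
        ≤ (r m : ℝ≥0∞) * (ENNReal.ofReal (2 * ε n) + ENNReal.ofReal ((r n : ℝ) / (r m : ℝ))) := by
      have h1 : (r m : ℝ≥0∞) * (ENNReal.ofReal (2 * ε n) + ENNReal.ofReal ((r n : ℝ) / (r m : ℝ)))
          = ENNReal.ofReal ((r m : ℝ) * (2 * ε n + (r n : ℝ) / (r m : ℝ))) := by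
        rw [← ENNReal.ofReal_add (by linarith [hεn.1] : (0:ℝ) ≤ 2 * ε n) (by positivity),
          ← ENNReal.ofReal_natCast (r m), ← ENNReal.ofReal_mul (by positivity)]
      have h2 : (r n : ℝ≥0∞) * (K : ℝ≥0∞) = ENNReal.ofReal ((r n : ℝ) * (K : ℝ)) := by
        rw [ENNReal.ofReal_mul (by positivity), ENNReal.ofReal_natCast, ENNReal.ofReal_natCast]
      rw [h1, h2]
      apply ENNReal.ofReal_le_ofReal
      have h3 : (r m : ℝ) * (2 * ε n + (r n : ℝ) / (r m : ℝ)) = 2 * ε n * (r m : ℝ) + (r n : ℝ) := by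
        field_simp
      rw [h3]
      have h4 : (K : ℝ) ≤ 2 * ε n * (r m : ℝ) / (r n : ℝ) + 1 := hKle
      have h5 : (r n : ℝ) * (K : ℝ) ≤ (r n : ℝ) * (2 * ε n * (r m : ℝ) / (r n : ℝ) + 1) :=
        mul_le_mul_of_nonneg_left h4 hNpos.le
      have h6 : (r n : ℝ) * (2 * ε n * (r m : ℝ) / (r n : ℝ) + 1)
          = 2 * ε n * (r m : ℝ) + (r n : ℝ) := by
        field_simp
      linarith
    calc (r n : ℝ≥0∞) * ((K : ℝ≥0∞) * c) = ((r n : ℝ≥0∞) * (K : ℝ≥0∞)) * c := by ring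
      _ ≤ ((r m : ℝ≥0∞) * (ENNReal.ofReal (2 * ε n) + ENNReal.ofReal ((r n : ℝ) / (r m : ℝ)))) * c :=
          mul_le_mul_left hcoef c
      _ = (r m : ℝ≥0∞) * c * (ENNReal.ofReal (2 * ε n) + ENNReal.ofReal ((r n : ℝ) / (r m : ℝ))) := by
          ring
  exact hmain.trans hfinal
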